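/- Let C = u_1u_2...u_k be a cycle in a graph G in which every vertex u_i has degree at least 3. Under a uniformly random orientable embedding of G, the probability that C is a facial walk equals 2·∏_{i=1}^k 1/(deg(u_i)−1). -/

import Mathlib

open Finset
open scoped Classical
set_option linter.unusedSectionVars false

/-- Number of cycles of a permutation, counting fixed points as cycles of length 1. -/
noncomputable def cycleCount {α : Type*} [Fintype α] [DecidableEq α] (σ : Equiv.Perm α) : ℕ :=
  σ.cycleType.card + (Finset.univ.filter fun x => σ x = x).card

/-- The rotation systems (i.e., orientable embeddings) of the multigraph whose darts are
`D` and where dart `d` has tail `vert d`: permutations of the darts preserving tails and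
acting as a single cycle on the darts at each vertex. -/
noncomputable def rotations {D V : Type*} [Fintype D] [DecidableEq D] (vert : D → V) :
    Finset (Equiv.Perm D) :=
  Finset.univ.filter fun ρ =>
    (∀ d, vert (ρ d) = vert d) ∧
    ∀ d d', vert d = vert d' → ∃ m : ℕ, (ρ ^ m) d = d'

/-- The degree of a vertex: the number of darts with tail `u`. -/
noncomputable def deg {D V : Type*} [Fintype D] (vert : D → V) (u : V) : ℕ :=
  (Finset.univ.filter fun d => vert d = u).card

section Aux

variable {D V ι : Type*} [Fintype D] [DecidableEq D]

lemma mem_rotations {vert : D → V} {ρ : Equiv.Perm D} :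
    ρ ∈ rotations vert ↔ (∀ d, vert (ρ d) = vert d) ∧
      ∀ d d', vert d = vert d' → ∃ m : ℕ, (ρ ^ m) d = d' := by
  simp [rotations]

lemma vert_pow {vert : D → V} {ρ : Equiv.Perm D} (h : ∀ d, vert (ρ d) = vert d) (m : ℕ)
    (d : D) : vert ((ρ ^ m) d) = vert d := by
  induction m with
  | zero => simp
  | succ n ih => rw [pow_succ', Equiv.Perm.mul_apply, h, ih]

lemma pow_fix {ρ : Equiv.Perm D} {d : D} (h : ρ d = d) (m : ℕ) : (ρ ^ m) d = d := by
  induction m with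
  | zero => simp
  | succ n ih => rw [pow_succ', Equiv.Perm.mul_apply, ih, h]

/-- A rotation has no fixed dart at a vertex of degree `≥ 2`. -/
lemma rot_ne_self {vert : D → V} {ρ : Equiv.Perm D} (hρ : ρ ∈ rotations vert) (d : D)
    (hd : 2 ≤ (Finset.univ.filter fun d' => vert d' = vert d).card) : ρ d ≠ d := by
  rw [mem_rotations] at hρ
  obtain ⟨d', hd', hne⟩ := Finset.exists_mem_ne
    (s := Finset.univ.filter fun d' => vert d' = vert d) (by omega) d
  rw [mem_filter] at hd'
  obtain ⟨m, hm⟩ := hρ.2 d d' hd'.2.symm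
  intro h
  exact hne (hm.symm.trans (pow_fix h m))

lemma fix_noncommProd {ι : Type*} (s : Finset ι) (f : ι → Equiv.Perm D) (comm) (d : D)
    (h : ∀ j ∈ s, f j d = d) : s.noncommProd f comm d = d :=
  Finset.noncommProd_induction s f comm (fun σ => σ d = d)
    (fun x y hx hy => by
      show (x * y) d = d
      rw [Equiv.Perm.mul_apply, show y d = d from hy, show x d = d from hx]) rfl h

lemma apply_noncommProd {ι : Type*} [DecidableEq ι] (s : Finset ι) (f : ι → Equiv.Perm D)
    (comm) (d : D) (i : ι) (hi : i ∈ s)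
    (h2 : ∀ j ∈ s, j ≠ i → f j (f i d) = f i d) :
    s.noncommProd f comm d = f i d := by
  rw [← Finset.noncommProd_erase_mul s hi f comm, Equiv.Perm.mul_apply]
  exact fix_noncommProd _ _ _ _ (fun j hj =>
    h2 j (Finset.mem_of_mem_erase hj) (Finset.ne_of_mem_erase hj))

variable [Fintype ι] [DecidableEq ι]

/-- Product of the swaps `(b i, c i)`, guarded so that the factors always commute. -/
noncomputable def swapProd (vert : D → V) (a b c : ι → D) : Equiv.Perm D :=
  Finset.univ.noncommProd
    (fun i => if vert (b i) = vert (a i) ∧ vert (c i) = vert (a i) ∧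
        (∀ j, vert (a j) = vert (a i) → j = i)
      then Equiv.swap (b i) (c i) else 1)
    (by
      intro i _ j _ hij
      simp only [Function.onFun]
      split_ifs with h1 h2 h2
      · obtain ⟨hb1, hc1, hu1⟩ := h1
        obtain ⟨hb2, hc2, hu2⟩ := h2
        have hvv : vert (a i) ≠ vert (a j) := fun h => hij (hu2 i h)
        apply Equiv.Perm.Disjoint.commute
        intro x
        by_cases hx : Equiv.swap (b i) (c i) x = x
        · left; exact hx
        · right
          have hx' : x = b i ∨ x = c i := by
            by_contra h
            push_neg at h
            exact hx (Equiv.swap_apply_of_ne_of_ne h.1 h.2)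
          have hvx : vert x = vert (a i) := by rcases hx' with rfl | rfl <;> assumption
          apply Equiv.swap_apply_of_ne_of_ne
          · rintro rfl; exact hvv (hvx.symm.trans hb2)
          · rintro rfl; exact hvv (hvx.symm.trans hc2)
      · exact Commute.one_right _
      · exact Commute.one_left _
      · exact Commute.one_left _)

variable {vert : D → V} {a b : ι → D}
  (hba : ∀ i, vert (b i) = vert (a i))
  (hinj : ∀ i j, vert (a i) = vert (a j) → i = j)

section SwapProd

variable {c : ι → D} (hc : ∀ i, vert (c i) = vert (a i))

include hba hinj hc

lemma swapProd_guard (i : ι) : vert (b i) = vert (a i) ∧ vert (c i) = vert (a i) ∧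
    (∀ j, vert (a j) = vert (a i) → j = i) :=
  ⟨hba i, hc i, fun j h => hinj j i h⟩

lemma swap_fixes {i j : ι} (hij : j ≠ i) {e : D} (he : vert e = vert (a i)) :
    Equiv.swap (b j) (c j) e = e := by
  have hvv : vert (a i) ≠ vert (a j) := fun h => hij (hinj j i h.symm)
  apply Equiv.swap_apply_of_ne_of_ne
  · rintro rfl; exact hvv (he.symm.trans (hba j))
  · rintro rfl; exact hvv (he.symm.trans (hc j))

lemma vert_swap {i : ι} {e : D} (he : vert e = vert (a i)) :
    vert (Equiv.swap (b i) (c i) e) = vert (a i) := by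
  rcases eq_or_ne e (b i) with rfl | h1
  · rw [Equiv.swap_apply_left]; exact hc i
  rcases eq_or_ne e (c i) with rfl | h2
  · rw [Equiv.swap_apply_right]; exact hba i
  · rw [Equiv.swap_apply_of_ne_of_ne h1 h2]; exact he

lemma swapProd_apply_of_eq {i : ι} {d : D} (hd : vert d = vert (a i)) :
    swapProd vert a b c d = Equiv.swap (b i) (c i) d := by
  unfold swapProd
  erw [apply_noncommProd _ _ _ d i (Finset.mem_univ i) ?_, if_pos (swapProd_guard hba hinj hc i)]
  intro j _ hji
  rw [if_pos (swapProd_guard hba hinj hc i), if_pos (swapProd_guard hba hinj hc j)]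
  exact swap_fixes hba hinj hc hji (vert_swap hba hinj hc hd)

lemma swapProd_apply_of_ne {d : D} (hd : ∀ i, vert d ≠ vert (a i)) :
    swapProd vert a b c d = d := by
  unfold swapProd
  apply fix_noncommProd
  intro j _
  split_ifs with h
  · apply Equiv.swap_apply_of_ne_of_ne
    · rintro rfl; exact hd j h.1
    · rintro rfl; exact hd j h.2.1
  · rfl

lemma vert_swapProd (d : D) : vert (swapProd vert a b c d) = vert d := by
  by_cases h : ∃ i, vert d = vert (a i)
  · obtain ⟨i, hi⟩ := h
    rw [swapProd_apply_of_eq hba hinj hc hi, vert_swap hba hinj hc hi, hi]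
  · push_neg at h
    rw [swapProd_apply_of_ne hba hinj hc h]

lemma swapProd_invol (d : D) : swapProd vert a b c (swapProd vert a b c d) = d := by
  by_cases h : ∃ i, vert d = vert (a i)
  · obtain ⟨i, hi⟩ := h
    rw [swapProd_apply_of_eq hba hinj hc hi,
      swapProd_apply_of_eq hba hinj hc (vert_swap hba hinj hc hi),
      Equiv.swap_apply_self]
  · push_neg at h
    rw [swapProd_apply_of_ne hba hinj hc h, swapProd_apply_of_ne hba hinj hc h]

lemma swapProd_sq : swapProd vert a b c * swapProd vert a b c = 1 :=
  Equiv.ext fun d => swapProd_invol hba hinj hc d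

end SwapProd

lemma conjPow_eq (S ρ : Equiv.Perm D) (hS : S * S = 1) (m : ℕ) :
    (S * ρ * S) ^ m = S * ρ ^ m * S := by
  induction m with
  | zero => rw [pow_zero, pow_zero, mul_one, hS]
  | succ n ih =>
    rw [pow_succ, ih, pow_succ]
    have h : S * ρ ^ n * S * (S * ρ * S) = S * ρ ^ n * (S * S) * (ρ * S) := by group
    rw [h, hS]
    group

lemma conj_mem_rotations {ρ : Equiv.Perm D} (hρ : ρ ∈ rotations vert) (S : Equiv.Perm D)
    (hSv : ∀ d, vert (S d) = vert d) (hS : S * S = 1) : S * ρ * S ∈ rotations vert := by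
  rw [mem_rotations] at hρ ⊢
  have hSS : ∀ d, S (S d) = d := fun d => by
    have := Equiv.ext_iff.1 hS d; simpa [Equiv.Perm.mul_apply] using this
  constructor
  · intro d
    simp only [Equiv.Perm.mul_apply]
    rw [hSv, hρ.1, hSv]
  · intro d d' hdd
    obtain ⟨m, hm⟩ := hρ.2 (S d) (S d') (by rw [hSv, hSv]; exact hdd)
    exact ⟨m, by rw [conjPow_eq _ _ hS]; simp only [Equiv.Perm.mul_apply]; rw [hm, hSS]⟩

include hba hinj in
/-- The key counting lemma: prescribing `ρ (a i) = b i` at every `i` divides the number of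
rotations by `∏ (deg - 1)`. -/
lemma count_aux (hne : ∀ i, a i ≠ b i)
    (hcard : ∀ i, 3 ≤ (Finset.univ.filter fun d => vert d = vert (a i)).card) :
    (rotations vert).card =
      ((rotations vert).filter fun ρ => ∀ i, ρ (a i) = b i).card *
        ∏ i, ((Finset.univ.filter fun d => vert d = vert (a i)).card - 1) := by
  classical
  set E := (rotations vert).filter fun ρ => ∀ i, ρ (a i) = b i with hE
  set P := Fintype.piFinset fun i => (Finset.univ.filter fun d => vert d = vert (a i)).erase (a i)
    with hP
  have hPcard : P.card = ∏ i, ((Finset.univ.filter fun d => vert d = vert (a i)).card - 1) := by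
    rw [hP, Fintype.card_piFinset]
    refine Finset.prod_congr rfl fun i _ => ?_
    rw [Finset.card_erase_of_mem (by simp)]
  have hmemP : ∀ {c : ι → D}, c ∈ P ↔ ∀ i, vert (c i) = vert (a i) ∧ c i ≠ a i := by
    intro c
    rw [hP, Fintype.mem_piFinset]
    constructor
    · intro h i
      have := h i
      rw [Finset.mem_erase, Finset.mem_filter] at this
      exact ⟨this.2.2, this.1⟩
    · intro h i
      rw [Finset.mem_erase, Finset.mem_filter]
      exact ⟨(h i).2, Finset.mem_univ _, (h i).1⟩
  rw [← hPcard, ← Finset.card_product]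
  set Sc : (ι → D) → Equiv.Perm D := fun c => swapProd vert a b c with hSc
  apply Finset.card_nbij' (fun ρ => (Sc (fun i => ρ (a i)) * ρ * Sc (fun i => ρ (a i)),
      fun i => ρ (a i)))
    (fun q => Sc q.2 * q.1 * Sc q.2)
  · -- forward membership
    intro ρ hρ
    dsimp only
    have hρ' := mem_rotations.1 hρ
    have hcv : ∀ i, vert (ρ (a i)) = vert (a i) := fun i => hρ'.1 (a i)
    have hcne : ∀ i, ρ (a i) ≠ a i := fun i => rot_ne_self hρ (a i) (by have := hcard i; omega)
    have hsq := swapProd_sq hba hinj hcv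
    rw [Finset.mem_coe, Finset.mem_product]
    constructor
    · rw [hE, Finset.mem_filter]
      refine ⟨conj_mem_rotations hρ _ (vert_swapProd hba hinj hcv) hsq, fun i => ?_⟩
      simp only [Equiv.Perm.mul_apply]
      have h1 : Sc (fun i => ρ (a i)) (a i) = a i := by
        rw [hSc, swapProd_apply_of_eq hba hinj hcv rfl]
        exact Equiv.swap_apply_of_ne_of_ne (hne i) (Ne.symm (hcne i))
      have h2 : Sc (fun i => ρ (a i)) (ρ (a i)) = b i := by
        rw [hSc, swapProd_apply_of_eq hba hinj hcv (hcv i), Equiv.swap_apply_right]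
      rw [h1, h2]
    · exact hmemP.2 fun i => ⟨hcv i, hcne i⟩
  · -- backward membership
    intro q hq
    dsimp only
    rw [Finset.mem_coe, Finset.mem_product] at hq
    obtain ⟨hq1, hq2⟩ := hq
    rw [hE, Finset.mem_filter] at hq1
    have hcv : ∀ i, vert (q.2 i) = vert (a i) := fun i => (hmemP.1 hq2 i).1
    exact conj_mem_rotations hq1.1 _ (vert_swapProd hba hinj hcv) (swapProd_sq hba hinj hcv)
  · -- left inverse
    intro ρ hρ
    dsimp only
    have hρ' := mem_rotations.1 hρ
    have hcv : ∀ i, vert (ρ (a i)) = vert (a i) := fun i => hρ'.1 (a i)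
    have hsq := swapProd_sq hba hinj hcv
    set S := Sc (fun i => ρ (a i))
    have : S * (S * ρ * S) * S = S * S * ρ * (S * S) := by group
    show S * (S * ρ * S) * S = ρ
    rw [this, hsq, one_mul, mul_one]
  · -- right inverse
    rintro ⟨τ, c⟩ hq
    dsimp only
    rw [Finset.mem_coe, Finset.mem_product] at hq
    obtain ⟨hq1, hq2⟩ := hq
    rw [hE, Finset.mem_filter] at hq1
    obtain ⟨hτrot, hτ⟩ := hq1
    have hcv : ∀ i, vert (c i) = vert (a i) := fun i => (hmemP.1 hq2 i).1
    have hcne : ∀ i, c i ≠ a i := fun i => (hmemP.1 hq2 i).2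
    have hsq := swapProd_sq hba hinj hcv
    set S := Sc c with hS
    have happ : ∀ i, (S * τ * S) (a i) = c i := by
      intro i
      simp only [Equiv.Perm.mul_apply]
      have h1 : S (a i) = a i := by
        rw [hS, hSc, swapProd_apply_of_eq hba hinj hcv rfl]
        exact Equiv.swap_apply_of_ne_of_ne (hne i) (Ne.symm (hcne i))
      have h2 : S (b i) = c i := by
        rw [hS, hSc, swapProd_apply_of_eq hba hinj hcv (hba i)]
        exact Equiv.swap_apply_left _ _
      rw [h1, hτ i, h2]
    have hc2 : (fun i => (S * τ * S) (a i)) = c := funext happ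
    rw [hc2]
    have h3 : S * (S * τ * S) * S = S * S * τ * (S * S) := by group
    rw [Prod.mk.injEq]
    refine ⟨?_, rfl⟩
    rw [h3, hsq, one_mul, mul_one]

/-- The set of rotations is nonempty. -/
lemma rotations_nonempty (vert : D → V) : (rotations vert).Nonempty := by
  classical
  set σ : V → Equiv.Perm D := fun v => (Finset.univ.filter fun d => vert d = v).toList.formPerm
    with hσ
  have hmem : ∀ v (d : D), d ∈ (Finset.univ.filter fun d => vert d = v).toList ↔ vert d = v := by
    intro v d; rw [Finset.mem_toList, Finset.mem_filter]; simp
  have hvσv : ∀ v (e : D), vert e = v → vert (σ v e) = v := by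
    intro v e he
    have : σ v e ∈ (Finset.univ.filter fun d' => vert d' = v).toList :=
      List.formPerm_apply_mem_of_mem ((hmem v e).2 he)
    exact (hmem _ _).1 this
  have hvσ : ∀ d, vert (σ (vert d) d) = vert d := fun d => hvσv (vert d) d rfl
  have hvσ' : ∀ d, vert ((σ (vert d))⁻¹ d) = vert d := by
    intro d
    by_contra h
    have hfix : σ (vert d) ((σ (vert d))⁻¹ d) = (σ (vert d))⁻¹ d :=
      List.formPerm_apply_of_notMem (fun hm => h ((hmem _ _).1 hm))
    have happ : σ (vert d) ((σ (vert d))⁻¹ d) = d := Equiv.apply_symm_apply _ _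
    have hd : d = (σ (vert d))⁻¹ d := happ.symm.trans hfix
    exact h (by rw [← hd])
  set ρ : Equiv.Perm D := {
    toFun := fun d => σ (vert d) d
    invFun := fun d => (σ (vert d))⁻¹ d
    left_inv := fun d => by
      show (σ (vert (σ (vert d) d)))⁻¹ (σ (vert d) d) = d
      rw [hvσ d]
      exact Equiv.symm_apply_apply _ _
    right_inv := fun d => by
      show σ (vert ((σ (vert d))⁻¹ d)) ((σ (vert d))⁻¹ d) = d
      rw [hvσ' d]
      exact Equiv.apply_symm_apply _ _ } with hρ
  have hρapp : ∀ d, ρ d = σ (vert d) d := fun d => rfl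
  have hvert : ∀ (d : D) (n : ℕ), vert ((σ (vert d) ^ n) d) = vert d := by
    intro d n
    induction n with
    | zero => simp
    | succ m ih =>
      rw [pow_succ', Equiv.Perm.mul_apply]
      exact hvσv (vert d) ((σ (vert d) ^ m) d) ih
  have hpow : ∀ (m : ℕ) (d : D), (ρ ^ m) d = ((σ (vert d)) ^ m) d := by
    intro m
    induction m with
    | zero => intro d; simp
    | succ n ih =>
      intro d
      rw [pow_succ', Equiv.Perm.mul_apply, ih d, hρapp, hvert d n,
        ← Equiv.Perm.mul_apply, ← pow_succ']
  refine ⟨ρ, mem_rotations.2 ⟨fun d => hvσ d, ?_⟩⟩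
  intro d d' hdd
  set l := (Finset.univ.filter fun e => vert e = vert d).toList with hl
  have hnd : l.Nodup := Finset.nodup_toList _
  have hd : d ∈ l := (hmem _ d).2 rfl
  have hd' : d' ∈ l := (hmem _ d').2 hdd.symm
  obtain ⟨i, hi, hgi⟩ := List.mem_iff_getElem.1 hd
  obtain ⟨j, hj, hgj⟩ := List.mem_iff_getElem.1 hd'
  have hσd : σ (vert d) = l.formPerm := rfl
  refine ⟨j + l.length - i, ?_⟩
  rw [hpow, hσd]
  have h1 : (i + (j + l.length - i)) % l.length = j := by
    rw [show i + (j + l.length - i) = j + l.length from by omega, Nat.add_mod_right,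
      Nat.mod_eq_of_lt hj]
  calc (l.formPerm ^ (j + l.length - i)) d
      = (l.formPerm ^ (j + l.length - i)) l[i] := by rw [hgi]
    _ = l[(i + (j + l.length - i)) % l.length]'(by
        have := Nat.mod_lt (i + (j + l.length - i)) (by omega : 0 < l.length); omega) :=
        List.formPerm_pow_apply_getElem l hnd _ i hi
    _ = l[j] := by simp only [h1]
    _ = d' := hgj

end Aux

/-- Let `C = u_1 u_2 ... u_k` be a cycle in a multigraph (dart set `D`, tail map `vert`,
fixed-point-free edge-pairing involution `inv`), given by darts `a i` from `u_i` to
`u_{i+1}` (indices mod `k`), with all vertices `u_i` pairwise distinct and of degree at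
least `3`.  Under a uniformly random orientable embedding (`C` being a facial walk iff the
rotation at each `u_i` maps the dart towards `u_{i+1}` to the dart towards `u_{i-1}` for
all `i`, or the reverse holds at every vertex), the probability that `C` is a facial walk
equals `2 ∏_{i=1}^k 1/(deg(u_i) - 1)`. -/
theorem probability_cycle_is_face {D V : Type*} [Fintype D] [DecidableEq D]
    (vert : D → V) (inv : Equiv.Perm D)
    (hfpf : ∀ d, inv d ≠ d) (hinv : ∀ d, inv (inv d) = d)
    (k : ℕ) [NeZero k] (hk : 3 ≤ k) (a : ZMod k → D)
    (conn : ∀ i, vert (inv (a i)) = vert (a (i + 1)))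
    (injv : Function.Injective fun i => vert (a i))
    (hdeg : ∀ i, 3 ≤ deg vert (vert (a i))) :
    (((rotations vert).filter fun ρ =>
          (∀ i, ρ (a i) = inv (a (i - 1))) ∨ (∀ i, ρ (inv (a (i - 1))) = a i)).card : ℝ) /
        ((rotations vert).card : ℝ) =
      2 * ∏ i : ZMod k, 1 / ((deg vert (vert (a i)) : ℝ) - 1) := by
  classical
  set b : ZMod k → D := fun i => inv (a (i - 1)) with hb
  simp only [show ∀ i : ZMod k, inv (a (i - 1)) = b i from fun i => rfl]
  have hba : ∀ i, vert (b i) = vert (a i) := by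
    intro i
    rw [hb]
    have := conn (i - 1)
    rwa [sub_add_cancel] at this
  have hinjv : ∀ i j, vert (a i) = vert (a j) → i = j := fun i j h => injv h
  have hne : ∀ i, a i ≠ b i := by
    intro i h
    have h2 : vert (inv (a i)) = vert (inv (b i)) := by rw [h]
    rw [conn i, hb, hinv] at h2
    have : i + 1 = i - 1 := hinjv _ _ h2
    have h3 : (2 : ZMod k) = 0 := by
      calc (2 : ZMod k) = (i + 1) - (i - 1) := by ring
      _ = 0 := by rw [this]; ring
    have h4 : ((2 : ℕ) : ZMod k) = 0 := by exact_mod_cast h3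
    rw [ZMod.natCast_eq_zero_iff] at h4
    have := Nat.le_of_dvd two_pos h4
    omega
  have hcard : ∀ i, 3 ≤ (Finset.univ.filter fun d => vert d = vert (a i)).card := hdeg
  -- the two events, counted by the key lemma
  have hE1 := count_aux hba hinjv hne hcard
  have hcard' : ∀ i, 3 ≤ (Finset.univ.filter fun d => vert d = vert (b i)).card := by
    intro i; rw [hba i]; exact hcard i
  have hE2' := count_aux (a := b) (b := a) (fun i => (hba i).symm)
    (fun i j h => hinjv i j (by rwa [hba i, hba j] at h)) (fun i => (hne i).symm) hcard'
  have hE2 : (rotations vert).card =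
      ((rotations vert).filter fun ρ => ∀ i, ρ (b i) = a i).card *
        ∏ i, ((Finset.univ.filter fun d => vert d = vert (a i)).card - 1) := by
    rw [hE2']
    congr 1
    exact Finset.prod_congr rfl fun i _ => by rw [hba i]
  -- disjointness of the two events
  have hdisj : Disjoint ((rotations vert).filter fun ρ => ∀ i, ρ (a i) = b i)
      ((rotations vert).filter fun ρ => ∀ i, ρ (b i) = a i) := by
    rw [Finset.disjoint_left]
    intro ρ h1 h2
    rw [Finset.mem_filter] at h1 h2
    obtain ⟨hρ, hab⟩ := h1
    have hba' := h2.2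
    have hmem := mem_rotations.1 hρ
    -- all powers of ρ keep a 0 inside {a 0, b 0}
    have hpow : ∀ m : ℕ, (ρ ^ m) (a 0) = a 0 ∨ (ρ ^ m) (a 0) = b 0 := by
      intro m
      induction m with
      | zero => left; simp
      | succ n ih =>
        rw [pow_succ', Equiv.Perm.mul_apply]
        rcases ih with h | h
        · right; rw [h]; exact hab 0
        · left; rw [h]; exact hba' 0
    obtain ⟨d', hd', hd1, hd2⟩ : ∃ d', vert d' = vert (a 0) ∧ d' ≠ a 0 ∧ d' ≠ b 0 := by
      by_contra hcon
      push_neg at hcon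
      have hsub : (Finset.univ.filter fun d => vert d = vert (a 0)) ⊆ {a 0, b 0} := by
        intro d hd
        rw [Finset.mem_filter] at hd
        rw [Finset.mem_insert, Finset.mem_singleton]
        by_contra h
        push_neg at h
        exact h.2 (hcon d hd.2 h.1)
      have := Finset.card_le_card hsub
      have h2 : ({a 0, b 0} : Finset D).card ≤ 2 :=
        (Finset.card_insert_le _ _).trans (by simp)
      have := hcard 0
      omega
    obtain ⟨m, hm⟩ := hmem.2 (a 0) d' hd'.symm
    rcases hpow m with h | h
    · exact hd1 (hm.symm.trans h)
    · exact hd2 (hm.symm.trans h)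
  -- assemble
  have hsplit : ((rotations vert).filter fun ρ =>
        (∀ i, ρ (a i) = b i) ∨ (∀ i, ρ (b i) = a i)) =
      ((rotations vert).filter fun ρ => ∀ i, ρ (a i) = b i) ∪
        ((rotations vert).filter fun ρ => ∀ i, ρ (b i) = a i) := Finset.filter_or _ _ _
  have hR : (rotations vert).card ≠ 0 := (rotations_nonempty vert).card_pos.ne'
  set R := (rotations vert).card
  set E1 := ((rotations vert).filter fun ρ => ∀ i, ρ (a i) = b i).card
  set E2 := ((rotations vert).filter fun ρ => ∀ i, ρ (b i) = a i).card
  set Pn := ∏ i, ((Finset.univ.filter fun d => vert d = vert (a i)).card - 1) with hPn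
  have hcardsum : ((rotations vert).filter fun ρ =>
      (∀ i, ρ (a i) = b i) ∨ (∀ i, ρ (b i) = a i)).card = E1 + E2 := by
    rw [hsplit, Finset.card_union_of_disjoint hdisj]
  have hPpos : 0 < Pn := by
    rw [hPn]
    apply Finset.prod_pos
    intro i _
    have := hcard i
    omega
  have hE1pos : 0 < E1 := by
    rcases Nat.eq_zero_or_pos E1 with h | h
    · exfalso; apply hR; rw [hE1, h, zero_mul]
    · exact h
  have hE12 : E1 = E2 := by
    have : E1 * Pn = E2 * Pn := by rw [← hE1, ← hE2]
    exact Nat.eq_of_mul_eq_mul_right hPpos this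
  -- now the real-number computation
  have hprod : ∏ i : ZMod k, 1 / ((deg vert (vert (a i)) : ℝ) - 1) = 1 / (Pn : ℝ) := by
    rw [hPn, Nat.cast_prod, one_div, ← Finset.prod_inv_distrib]
    refine Finset.prod_congr rfl fun i _ => ?_
    rw [one_div]
    congr 1
    have h3 : 3 ≤ deg vert (vert (a i)) := hdeg i
    rw [show (Finset.univ.filter fun d => vert d = vert (a i)).card
      = deg vert (vert (a i)) from rfl]
    rw [Nat.cast_sub (by omega : 1 ≤ deg vert (vert (a i)))]
    norm_num
  rw [hcardsum, ← hE12]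
  have hPne : (Pn : ℝ) ≠ 0 := Nat.cast_ne_zero.2 (by omega)
  have hE1ne : (E1 : ℝ) ≠ 0 := Nat.cast_ne_zero.2 (by omega)
  have hRval : (R : ℝ) = E1 * Pn := by rw [hE1]; push_cast; ring
  rw [hprod, hRval]
  push_cast
  field_simp
  ring
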